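/- Let 𝔫 be the 8-dimensional metric nilpotent Lie algebra with orthonormal basis e₁,…,e₈ whose only nonzero brackets among basis vectors are [e₄,e₇] = e₈ = −[e₇,e₄] and [e₅,e₆] = e₈ = −[e₆,e₅], with Levi-Civita map ∇ given by the Koszul formula, and let ρ = ½e^{123} + ¼e^1∧(e^{47}−e^{56}) + ¼e^2∧(e^{46}+e^{57}) + ¼e^3∧(e^{45}−e^{67}) + (√3/4)e^8∧(e^{45}+e^{67}). Then the covariant derivative ∇_{e₄}ρ, i.e. the trilinear map (a,b,c) ↦ −ρ(∇_{e₄}a, b, c) − ρ(a, ∇_{e₄}b, c) − ρ(a, b, ∇_{e₄}c) on basis vectors a,b,c, is nonzero; in particular ρ is not parallel although dρ = 0 and d(⋆ρ) = 0. -/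
import Mathlib


noncomputable section

/-- The standard basis vectors of ℝ⁸ (`e i` is `eᵢ₊₁` in the paper's notation). -/
def e (i : Fin 8) : Fin 8 → ℝ := fun j => if i = j then 1 else 0

/-- The standard inner product on ℝ⁸. -/
def dot (x y : Fin 8 → ℝ) : ℝ := ∑ i, x i * y i

/-- The alternating 3-form `eⁱ ∧ eʲ ∧ eᵏ` on ℝ⁸ (indices in `Fin 8`). -/
def wedge3 (i j k : Fin 8) : AlternatingMap ℝ (Fin 8 → ℝ) ℝ (Fin 3) :=
  (Matrix.detRowAlternating : AlternatingMap ℝ (Fin 3 → ℝ) ℝ (Fin 3)).compLinearMap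
    (LinearMap.funLeft ℝ ℝ ![i, j, k])

/-- The PSU(3)-form `ρ₀ = ½e^{123} + ¼e^1∧(e^{47}−e^{56}) + ¼e^2∧(e^{46}+e^{57})
+ ¼e^3∧(e^{45}−e^{67}) + (√3/4)e^8∧(e^{45}+e^{67})` (indices shifted down by one). -/
def ρ₀ : AlternatingMap ℝ (Fin 8 → ℝ) ℝ (Fin 3) :=
  (1/2 : ℝ) • wedge3 0 1 2
  + (1/4 : ℝ) • (wedge3 0 3 6 - wedge3 0 4 5)
  + (1/4 : ℝ) • (wedge3 1 3 5 + wedge3 1 4 6)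
  + (1/4 : ℝ) • (wedge3 2 3 4 - wedge3 2 5 6)
  + (Real.sqrt 3 / 4) • (wedge3 7 3 4 + wedge3 7 5 6)

/-- The bracket `[x,y]_ρ` induced by a 3-form `ρ`, determined by `⟨[x,y]_ρ, z⟩ = ρ(x,y,z)`. -/
def bracketOf (ρ : AlternatingMap ℝ (Fin 8 → ℝ) ℝ (Fin 3)) (x y : Fin 8 → ℝ) : Fin 8 → ℝ :=
  fun k => ρ ![x, y, e k]

/-- The bracket of the 8-dimensional nilpotent Lie algebra 𝔫 whose only nonzero brackets among
the orthonormal basis vectors are `[e₄,e₇] = e₈ = −[e₇,e₄]` and `[e₅,e₆] = e₈ = −[e₆,e₅]`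
(indices shifted down by one), extended bilinearly. -/
def brN (x y : Fin 8 → ℝ) : Fin 8 → ℝ := fun k =>
  if k = 7 then x 3 * y 6 - x 6 * y 3 + x 4 * y 5 - x 5 * y 4 else 0

/-- The Levi-Civita map of 𝔫, given by the Koszul formula
`2⟨∇ₓy, z⟩ = ⟨[x,y],z⟩ − ⟨[x,z],y⟩ − ⟨[y,z],x⟩` (with `z = e k` giving the coordinates). -/
def nabla (x y : Fin 8 → ℝ) : Fin 8 → ℝ := fun k =>
  (1/2 : ℝ) * (dot (brN x y) (e k) - dot (brN x (e k)) y - dot (brN y (e k)) x)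

lemma wedge3_apply (i j k : Fin 8) (x y z : Fin 8 → ℝ) :
    wedge3 i j k ![x, y, z] =
      x i * y j * z k - x i * y k * z j - x j * y i * z k
        + x j * y k * z i + x k * y i * z j - x k * y j * z i := by
  have h : wedge3 i j k ![x, y, z]
      = Matrix.det (Matrix.of fun r c => (![x, y, z] r) (![i, j, k] c)) := rfl
  rw [h, Matrix.det_fin_three]
  simp [Matrix.of_apply]

lemma nab0 : nabla (e 3) (e 0) = fun _ => (0:ℝ) := by
  funext k; fin_cases k <;> norm_num (config := { decide := true }) [nabla, brN, dot, e, Fin.sum_univ_succ]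

lemma nab3 : nabla (e 3) (e 3) = fun _ => (0:ℝ) := by
  funext k; fin_cases k <;> norm_num (config := { decide := true }) [nabla, brN, dot, e, Fin.sum_univ_succ]

lemma nab7 : nabla (e 3) (e 7) = fun k => if k = 6 then -(1/2 : ℝ) else 0 := by
  funext k; fin_cases k <;> norm_num (config := { decide := true }) [nabla, brN, dot, e, Fin.sum_univ_succ]

/-- On the nilpotent Lie algebra 𝔫 (only nonzero basis brackets
`[e₄,e₇] = [e₅,e₆] = e₈`), the covariant derivative `∇_{e₄}ρ₀` of the PSU(3)-form `ρ₀`, i.e. the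
trilinear map `(a,b,c) ↦ −ρ₀(∇_{e₄}a, b, c) − ρ₀(a, ∇_{e₄}b, c) − ρ₀(a, b, ∇_{e₄}c)` on basis
vectors, is nonzero; in particular `ρ₀` is not parallel. -/
theorem psu3_form_not_parallel_on_nilmanifold :
    ∃ a b c : Fin 8,
      - ρ₀ ![nabla (e 3) (e a), e b, e c] - ρ₀ ![e a, nabla (e 3) (e b), e c]
        - ρ₀ ![e a, e b, nabla (e 3) (e c)] ≠ 0 := by
  refine ⟨0, 3, 7, ?_⟩
  rw [nab0, nab3, nab7]
  norm_num (config := { decide := true }) [ρ₀, AlternatingMap.add_apply, AlternatingMap.sub_apply,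
    AlternatingMap.smul_apply, wedge3_apply, e]
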